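/- Let X be a totally bounded metric space with modulus of total boundedness α, F ⊆ X, and (x_n) a sequence in X such that: (a) (x_n) is Fejér monotone with respect to F, and (b) for every k ∈ ℕ there is N with x_N within distance 1/(k+1) of some point of the approximation AF_k of F, where (AF_k) is an approximation of F compatible with the Fejér monotonicity in the uniform sense. Then (x_n) is Cauchy. In the special case where F = Argmin(f) for convex lsc proper f on a complete totally bounded CAT(0) space, and (x_n) is the proximal point algorithm with Σγ_n = ∞, the sequence (x_n) is Cauchy and its limit is a minimizer of f. -/

import Mathlib

open Filter

private lemma tb_of_modulus {X : Type*} [MetricSpace X] (α : ℕ → ℕ)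
    (hα : ∀ k : ℕ, ∀ u : ℕ → X,
      ∃ i j : ℕ, i < j ∧ j ≤ α k ∧ dist (u i) (u j) ≤ 1 / ((k:ℝ)+1)) :
    TotallyBounded (Set.univ : Set X) := by
  classical
  rw [Metric.totallyBounded_iff]
  intro ε hε
  by_contra hcov
  push_neg at hcov
  have hpick : ∀ s : Finset X, ∃ z : X, ∀ y ∈ s, ε ≤ dist z y := by
    intro s
    have h := hcov (↑s : Set X) s.finite_toSet
    rw [Set.not_subset] at h
    obtain ⟨z, -, hz⟩ := h
    refine ⟨z, fun y hy => ?_⟩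
    by_contra hlt
    push_neg at hlt
    exact hz (Set.mem_biUnion hy (Metric.mem_ball.2 hlt))
  choose pick hpick' using hpick
  let F : ℕ → Finset X := fun n => Nat.rec ∅ (fun _ s => insert (pick s) s) n
  have hF : ∀ n, F (n+1) = insert (pick (F n)) (F n) := fun n => rfl
  have hmono : Monotone F := monotone_nat_of_le_succ (fun n => by
    rw [hF]; exact Finset.subset_insert _ _)
  have hmem : ∀ i j, i < j → pick (F i) ∈ F j := by
    intro i j hij
    have h1 : pick (F i) ∈ F (i+1) := by rw [hF]; exact Finset.mem_insert_self _ _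
    exact hmono hij h1
  obtain ⟨k, hk⟩ := exists_nat_one_div_lt hε
  obtain ⟨i, j, hij, -, hd⟩ := hα k (fun n => pick (F n))
  have h2 : ε ≤ dist (pick (F j)) (pick (F i)) := hpick' (F j) _ (hmem i j hij)
  rw [dist_comm] at h2
  have : (1 : ℝ) / ((k:ℝ)+1) < ε := hk
  linarith

/-- In a complete totally bounded CAT(0) space (with modulus of
total boundedness α), the proximal point algorithm for a convex lsc proper
function f with Argmin(f) ≠ ∅ and Σγₙ = ∞ is Cauchy (being Fejér monotone with
respect to Argmin(f) and having approximate minimizers), and its limit is a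
minimizer of f. -/
theorem stmt18
    {X : Type*} [MetricSpace X] [CompleteSpace X]
    -- geodesic convex-combination structure: `w x y t` is the point `(1-t)x + ty`
    (w : X → X → ℝ → X)
    (hw1 : ∀ x y : X, ∀ t ∈ Set.Icc (0:ℝ) 1, dist x (w x y t) = t * dist x y)
    (hw2 : ∀ x y : X, ∀ t ∈ Set.Icc (0:ℝ) 1, dist y (w x y t) = (1-t) * dist x y)
    -- the CAT(0) inequality
    (hcat : ∀ x y z : X, ∀ t ∈ Set.Icc (0:ℝ) 1,
      dist z (w x y t)^2 ≤ (1-t) * dist z x^2 + t * dist z y^2 - t*(1-t) * dist x y^2)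
    (f : X → EReal)
    -- f is convex, lower semicontinuous and proper (never -∞, somewhere finite)
    (hconv : ∀ x y : X, ∀ t ∈ Set.Icc (0:ℝ) 1,
      f (w x y t) ≤ ((1 - t : ℝ) : EReal) * f x + ((t : ℝ) : EReal) * f y)
    (hlsc : LowerSemicontinuous f)
    (hproper : ∃ x, f x ≠ ⊤) (hbot : ∀ x, f x ≠ ⊥)
    -- J is the resolvent: J γ x minimizes y ↦ f(y) + (1/(2γ)) d(x,y)², uniquely
    (J : ℝ → X → X)
    (hJ : ∀ γ : ℝ, 0 < γ → ∀ x y : X,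
      f (J γ x) + ((1/(2*γ) * dist x (J γ x)^2 : ℝ) : EReal) ≤
        f y + ((1/(2*γ) * dist x y^2 : ℝ) : EReal))
    (hJuniq : ∀ γ : ℝ, 0 < γ → ∀ x m : X,
      (∀ y, f m + ((1/(2*γ) * dist x m^2 : ℝ) : EReal) ≤
        f y + ((1/(2*γ) * dist x y^2 : ℝ) : EReal)) → m = J γ x)
    -- X is totally bounded, with modulus of total boundedness α
    (α : ℕ → ℕ)
    (hα : ∀ k : ℕ, ∀ u : ℕ → X,
      ∃ i j : ℕ, i < j ∧ j ≤ α k ∧ dist (u i) (u j) ≤ 1 / ((k:ℝ)+1))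
    (hmin : ∃ p : X, ∀ y, f p ≤ f y)
    (γseq : ℕ → ℝ) (hγseq : ∀ n, 0 < γseq n)
    (hdiv : Filter.Tendsto (fun N => ∑ i ∈ Finset.range N, γseq i)
      Filter.atTop Filter.atTop)
    (x0 : X) (x : ℕ → X) (hx0 : x 0 = x0)
    (hxs : ∀ n, x (n+1) = J (γseq n) (x n)) :
    CauchySeq x ∧
      ∃ z : X, Filter.Tendsto x Filter.atTop (nhds z) ∧ ∀ y, f z ≤ f y := by
  obtain ⟨p, hp⟩ := hmin
  obtain ⟨x', hx'⟩ := hproper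
  -- the key estimates for one resolvent step, w.r.t. an arbitrary minimizer q
  have key : ∀ q : X, (∀ y, f q ≤ f y) → ∀ γ : ℝ, 0 < γ → ∀ xx : X,
      f (J γ xx) ≠ ⊤ ∧
      dist xx (J γ xx)^2 + dist (J γ xx) q^2 ≤ dist xx q^2 ∧
      (f (J γ xx)).toReal - (f q).toReal ≤
        1/(2*γ) * (dist xx q^2 - dist (J γ xx) q^2) := by
    intro q hq γ hγ xx
    have hfq_top : f q ≠ ⊤ := by
      intro h
      exact hx' (top_le_iff.1 (h ▸ hq x'))
    set bq : ℝ := (f q).toReal with hbq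
    have hfq : f q = (bq : EReal) := (EReal.coe_toReal hfq_top (hbot q)).symm
    set u : X := J γ xx with hu
    have hc : (0:ℝ) < 1/(2*γ) := by positivity
    have hut : f u ≠ ⊤ := by
      intro h
      have h1 := hJ γ hγ xx x'
      rw [← hu, h, EReal.top_add_coe] at h1
      exact absurd h1 (not_le.2 (EReal.add_lt_top hx' (EReal.coe_ne_top _)))
    set a : ℝ := (f u).toReal with ha
    have hfu : f u = (a : EReal) := (EReal.coe_toReal hut (hbot u)).symm
    have hab : bq ≤ a := by
      have := hq u
      rw [hfq, hfu] at this
      exact_mod_cast this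
    set A : ℝ := dist xx u ^ 2 with hA
    set B : ℝ := dist xx q ^ 2 with hB
    set C : ℝ := dist u q ^ 2 with hC
    have hA0 : 0 ≤ A := sq_nonneg _
    have hC0 : 0 ≤ C := sq_nonneg _
    have main_t : ∀ t : ℝ, 0 < t → t < 1 →
        a - bq ≤ 1/(2*γ) * (B - A - C) + 1/(2*γ) * t * C := by
      intro t ht0 ht1
      have ht : t ∈ Set.Icc (0:ℝ) 1 := ⟨ht0.le, ht1.le⟩
      have h1 := hJ γ hγ xx (w u q t)
      rw [← hu] at h1
      have h2 := hconv u q t ht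
      rw [hfu, hfq] at h2
      have h2' : f (w u q t) ≤ (((1-t)*a + t*bq : ℝ) : EReal) := by
        refine h2.trans_eq ?_
        norm_cast
      have h3 := hcat u q xx t ht
      have h3' : ((1/(2*γ) * dist xx (w u q t)^2 : ℝ) : EReal) ≤
          ((1/(2*γ) * ((1-t)*A + t*B - t*(1-t)*C) : ℝ) : EReal) := by
        rw [EReal.coe_le_coe_iff]
        exact mul_le_mul_of_nonneg_left h3 hc.le
      have h4 : ((a + 1/(2*γ) * A : ℝ) : EReal) ≤
          (((1-t)*a + t*bq + 1/(2*γ) * ((1-t)*A + t*B - t*(1-t)*C) : ℝ) : EReal) := by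
        calc ((a + 1/(2*γ) * A : ℝ) : EReal)
            = f u + ((1/(2*γ) * A : ℝ) : EReal) := by rw [hfu]; norm_cast
          _ ≤ f (w u q t) + ((1/(2*γ) * dist xx (w u q t)^2 : ℝ) : EReal) := h1
          _ ≤ (((1-t)*a + t*bq : ℝ) : EReal) +
              ((1/(2*γ) * ((1-t)*A + t*B - t*(1-t)*C) : ℝ) : EReal) :=
              add_le_add h2' h3'
          _ = (((1-t)*a + t*bq + 1/(2*γ) * ((1-t)*A + t*B - t*(1-t)*C) : ℝ) : EReal) := by
              norm_cast
      have h5 : a + 1/(2*γ) * A ≤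
          (1-t)*a + t*bq + 1/(2*γ) * ((1-t)*A + t*B - t*(1-t)*C) := by
        exact_mod_cast h4
      nlinarith [h5, ht0, mul_pos hc ht0]
    have key3 : a - bq ≤ 1/(2*γ) * (B - A - C) := by
      by_contra hcon
      push_neg at hcon
      set δ : ℝ := a - bq - 1/(2*γ) * (B - A - C) with hδ
      have hδ0 : 0 < δ := by simp only [hδ]; linarith
      have hden : (0:ℝ) < 1/(2*γ) * C + 1 := by positivity
      set t : ℝ := min (1/2) (δ / (2 * (1/(2*γ) * C + 1))) with htdef
      have ht0 : 0 < t := lt_min (by norm_num) (by positivity)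
      have ht1 : t < 1 := lt_of_le_of_lt (min_le_left _ _) (by norm_num)
      have hmt := main_t t ht0 ht1
      have htle : t ≤ δ / (2 * (1/(2*γ) * C + 1)) := min_le_right _ _
      rw [le_div_iff₀ (by positivity)] at htle
      have h6 : 1/(2*γ) * t * C ≤ δ / 2 := by nlinarith [mul_nonneg (mul_nonneg hc.le ht0.le) hC0]
      simp only [hδ] at hδ0 h6
      linarith
    refine ⟨hut, ?_, ?_⟩
    · nlinarith [key3, hab, hc]
    · nlinarith [key3, hc, hA0]
  -- basic facts about the sequence
  have hfx_top : ∀ n, f (x (n+1)) ≠ ⊤ := by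
    intro n
    rw [hxs n]
    exact (key p hp (γseq n) (hγseq n) (x n)).1
  have hfdec : ∀ n, f (x (n+1)) ≤ f (x n) := by
    intro n
    have h1 := hJ (γseq n) (hγseq n) (x n) (x n)
    rw [← hxs n] at h1
    have e0 : (1/(2*γseq n) * dist (x n) (x n)^2 : ℝ) = 0 := by simp
    rw [e0, EReal.coe_zero, add_zero] at h1
    refine le_trans ?_ h1
    have hγ := hγseq n
    exact le_add_of_nonneg_right (EReal.coe_nonneg.2 (by positivity))
  have hfmono : ∀ m n, m ≤ n → f (x n) ≤ f (x m) := by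
    intro m n h
    induction n, h using Nat.le_induction with
    | base => exact le_refl _
    | succ n hmn ih => exact (hfdec n).trans ih
  have hfp_top : f p ≠ ⊤ := fun h => hx' (top_le_iff.1 (h ▸ hp x'))
  set b : ℝ := (f p).toReal with hbdef
  have hfp : f p = (b : EReal) := (EReal.coe_toReal hfp_top (hbot p)).symm
  have hstep : ∀ n, 2 * γseq n * ((f (x (n+1))).toReal - b) ≤
      dist (x n) p^2 - dist (x (n+1)) p^2 := by
    intro n
    have h := (key p hp (γseq n) (hγseq n) (x n)).2.2
    rw [← hxs n] at h
    have hγ := hγseq n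
    rw [div_mul_eq_mul_div, one_mul, le_div_iff₀ (by linarith)] at h
    nlinarith [h]
  have hNsum : ∀ N, 2 * (∑ i ∈ Finset.range N, γseq i) * ((f (x (N+1))).toReal - b) ≤
      dist (x 0) p^2 := by
    intro N
    have h1 : ∀ i ∈ Finset.range N,
        2 * γseq i * ((f (x (N+1))).toReal - b) ≤ dist (x i) p^2 - dist (x (i+1)) p^2 := by
      intro i hi
      have hiN : i + 1 ≤ N + 1 := by
        simp only [Finset.mem_range] at hi; omega
      have hle : (f (x (N+1))).toReal ≤ (f (x (i+1))).toReal :=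
        EReal.toReal_le_toReal (hfmono (i+1) (N+1) hiN) (hbot _) (hfx_top i)
      have h2 := hstep i
      have hγ := hγseq i
      nlinarith
    calc 2 * (∑ i ∈ Finset.range N, γseq i) * ((f (x (N+1))).toReal - b)
        = ∑ i ∈ Finset.range N, 2 * γseq i * ((f (x (N+1))).toReal - b) := by
          rw [Finset.mul_sum, Finset.sum_mul]
      _ ≤ ∑ i ∈ Finset.range N, (dist (x i) p^2 - dist (x (i+1)) p^2) :=
          Finset.sum_le_sum h1
      _ = dist (x 0) p^2 - dist (x N) p^2 := Finset.sum_range_sub' (fun i => dist (x i) p^2) N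
      _ ≤ dist (x 0) p^2 := by nlinarith [sq_nonneg (dist (x N) p)]
  -- the values f(x n) eventually go below any C > f p
  have hftend : ∀ C : EReal, f p < C → ∀ᶠ n in atTop, f (x n) < C := by
    intro C hC
    induction C using EReal.rec with
    | bot => exact absurd hC (by simp)
    | top =>
      refine Filter.eventually_atTop.2 ⟨1, fun n hn => ?_⟩
      obtain ⟨N, rfl⟩ : ∃ N, n = N + 1 := ⟨n - 1, by omega⟩
      exact (hfx_top N).lt_top
    | coe r =>
      have hbr : b < r := by
        rw [hfp] at hC
        exact_mod_cast hC
      have hSpos : ∀ᶠ N in atTop, (0:ℝ) < ∑ i ∈ Finset.range N, γseq i :=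
        hdiv.eventually (eventually_gt_atTop 0)
      have hq : Tendsto (fun N => dist (x 0) p^2 / (2 * ∑ i ∈ Finset.range N, γseq i))
          atTop (nhds 0) :=
        Filter.Tendsto.div_atTop tendsto_const_nhds (hdiv.const_mul_atTop two_pos)
      have hsmall : ∀ᶠ N in atTop,
          dist (x 0) p^2 / (2 * ∑ i ∈ Finset.range N, γseq i) < r - b :=
        hq.eventually (gt_mem_nhds (by linarith))
      obtain ⟨N₀, hN₀⟩ := Filter.eventually_atTop.1 (hSpos.and hsmall)
      refine Filter.eventually_atTop.2 ⟨N₀ + 1, fun n hn => ?_⟩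
      obtain ⟨N, rfl⟩ : ∃ N, n = N + 1 := ⟨n - 1, by omega⟩
      obtain ⟨hS1, hS2⟩ := hN₀ N (by omega)
      have hsum := hNsum N
      have haN : (f (x (N+1))).toReal - b ≤
          dist (x 0) p^2 / (2 * ∑ i ∈ Finset.range N, γseq i) := by
        rw [le_div_iff₀ (by linarith)]
        nlinarith
      have hlt : (f (x (N+1))).toReal < r := by linarith
      rw [show f (x (N+1)) = (((f (x (N+1))).toReal : ℝ) : EReal) from
        (EReal.coe_toReal (hfx_top N) (hbot _)).symm]
      exact_mod_cast hlt
  -- compactness: extract a convergent subsequence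
  have htb : TotallyBounded (Set.univ : Set X) := tb_of_modulus α hα
  have hcomp : IsCompact (Set.univ : Set X) :=
    isCompact_iff_totallyBounded_isComplete.2 ⟨htb, completeSpace_iff_isComplete_univ.1 ‹_›⟩
  obtain ⟨z, -, φ, hφ, hφt⟩ := hcomp.tendsto_subseq (fun n => Set.mem_univ (x n))
  -- the limit of the subsequence is a minimizer
  have hz : ∀ y, f z ≤ f y := by
    suffices hzp : f z ≤ f p by exact fun y => hzp.trans (hp y)
    by_contra hcon
    push_neg at hcon
    obtain ⟨C, hC1, hC2⟩ := exists_between hcon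
    have h1 : ∀ᶠ j in atTop, C < f (x (φ j)) := hφt.eventually (hlsc z C hC2)
    have h2 : ∀ᶠ j in atTop, f (x (φ j)) < C :=
      hφ.tendsto_atTop.eventually (hftend C hC1)
    obtain ⟨j, hj1, hj2⟩ := (h1.and h2).exists
    exact absurd (hj1.trans hj2) (lt_irrefl _)
  -- Fejér monotonicity w.r.t. z and convergence of the whole sequence
  have hdz : ∀ n, dist (x (n+1)) z ≤ dist (x n) z := by
    intro n
    have h := (key z hz (γseq n) (hγseq n) (x n)).2.1
    rw [← hxs n] at h
    nlinarith [dist_nonneg (x := x (n+1)) (y := z), dist_nonneg (x := x n) (y := z),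
      sq_nonneg (dist (x n) (x (n+1)))]
  have hdzmono : ∀ m n, m ≤ n → dist (x n) z ≤ dist (x m) z := by
    intro m n h
    induction n, h using Nat.le_induction with
    | base => exact le_refl _
    | succ n hmn ih => exact (hdz n).trans ih
  have hxt : Tendsto x atTop (nhds z) := by
    rw [Metric.tendsto_atTop]
    intro ε hε
    have := hφt.eventually (Metric.ball_mem_nhds z hε)
    obtain ⟨j, hj⟩ := this.exists
    refine ⟨φ j, fun n hn => ?_⟩
    have h1 : dist (x n) z ≤ dist (x (φ j)) z := hdzmono (φ j) n hn
    have h2 : dist (x (φ j)) z < ε := Metric.mem_ball.1 hj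
    linarith
  exact ⟨hxt.cauchySeq, z, hxt, hz⟩
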